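/- Let x*₁,…,x*_p ∈ ℝⁿ and let V₁,…,V_p : ℝⁿ → ℝ be continuously differentiable with V_j(x*_j) = 0. Fix constants c_j > 0 and define h_j(x) := c_j − V_j(x), the regions R_j := {x : V_j(x) ≤ c_j}, the pivot h̃(x) := max^{(r)}(h₁(x),…,h_p(x)) for a fixed r ∈ {1,…,p}, and the combinatorial region of attraction R̃ := {x : h̃(x) ≥ 0}. Fix j† ∈ {1,…,p} and assume: (a) x*_{j†} lies in the interior of R̃ ∩ R_{j†}; (b) there exist r₀ > 0 and class-K functions α₁, α₂ (with R_{j†} contained in the ball of radius r₀ about x*_{j†}) such that α₁(‖x − x*_{j†}‖) ≤ V_{j†}(x) ≤ α₂(‖x − x*_{j†}‖) for all x with ‖x − x*_{j†}‖ < r₀; (c) there are a continuous closed-loop vector field F : ℝⁿ → ℝⁿ with F(x*_{j†}) = 0, a continuous function θ : ℝⁿ → [0,∞), a locally Lipschitz class-K function α_{j†}, a locally Lipschitz extended class-K function α_{h̃}, a continuous positive definite ρ : ℝ → ℝ, and an open set D ⊇ R̃ such that for all x ∈ D: ⟨∇V_{j†}(x), F(x)⟩ ≤ −α_{j†}(V_{j†}(x))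 + θ(x)·max(0, −h_{j†}(x)), and for every j ∈ {1,…,p}: ⟨∇h_j(x), F(x)⟩ ≥ −α_{h̃}(h_j(x)) − θ(x)·ρ(h_j(x) − h̃(x)). Then: (i) every solution x(·) of ẋ = F(x) on [0,∞) with x(0) ∈ R̃ satisfies x(t) ∈ R̃ for all t ≥ 0; (ii) x*_{j†} is asymptotically stable for ẋ = F(x) (for every ε > 0 there is δ > 0 such that solutions starting within δ of x*_{j†} remain within ε for all t ≥ 0, and solutions starting sufficiently close converge to x*_{j†}); and (iii) every solution with x(0) ∈ R̃ ∩ R_{j†} satisfies x(t) ∈ R̃ ∩ R_{j†} for all t ≥ 0 and x(t) → x*_{j†} as t → ∞. -/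

import Mathlib

open scoped RealInnerProductSpace

/-- The `r`-th largest value among `w 0, …, w (p-1)`: the maximum over all subsets
`S ⊆ Fin p` with `|S| = r` of `min_{j ∈ S} w j`. -/
noncomputable def rthMax {p : ℕ} (r : ℕ) (w : Fin p → ℝ) : ℝ :=
  sSup {m : ℝ | ∃ S : Finset (Fin p), S.card = r ∧ m = sInf (w '' ↑S)}

/-- A class-K function: continuous and strictly increasing on `[0,∞)`, vanishing at `0`,
and mapping `[0,∞)` into `[0,∞)`. -/
def IsClassK (α : ℝ → ℝ) : Prop :=
  ContinuousOn α (Set.Ici 0) ∧ StrictMonoOn α (Set.Ici 0) ∧ α 0 = 0 ∧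
    ∀ s : ℝ, 0 ≤ s → 0 ≤ α s

/-- An extended class-K function: continuous, strictly increasing, vanishing at `0`. -/
def IsClassKe (α : ℝ → ℝ) : Prop :=
  Continuous α ∧ StrictMono α ∧ α 0 = 0

/-- A positive definite function: nonnegative, vanishing exactly at `0`. -/
def IsPosDef (ρ : ℝ → ℝ) : Prop :=
  (∀ s : ℝ, 0 ≤ ρ s) ∧ ρ 0 = 0 ∧ ∀ s : ℝ, s ≠ 0 → 0 < ρ s

section rth

variable {p r : ℕ}

lemma rthMax_set_finite (w : Fin p → ℝ) :
    {m : ℝ | ∃ S : Finset (Fin p), S.card = r ∧ m = sInf (w '' ↑S)}.Finite := by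
  have h : {m : ℝ | ∃ S : Finset (Fin p), S.card = r ∧ m = sInf (w '' ↑S)} ⊆
      (fun S : Finset (Fin p) => sInf (w '' ↑S)) '' Set.univ := by
    rintro m ⟨S, _, rfl⟩
    exact ⟨S, Set.mem_univ _, rfl⟩
  exact (Set.finite_univ.image _).subset h

lemma rthMax_set_nonempty (hrp : r ≤ p) (w : Fin p → ℝ) :
    {m : ℝ | ∃ S : Finset (Fin p), S.card = r ∧ m = sInf (w '' ↑S)}.Nonempty := by
  obtain ⟨S, -, hS⟩ := Finset.exists_subset_card_eq
    (show r ≤ (Finset.univ : Finset (Fin p)).card by simpa using hrp)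
  exact ⟨sInf (w '' ↑S), S, hS, rfl⟩

lemma le_rthMax (w : Fin p → ℝ) {S : Finset (Fin p)} (hS : S.card = r) :
    sInf (w '' ↑S) ≤ rthMax r w :=
  le_csSup (rthMax_set_finite w).bddAbove ⟨S, hS, rfl⟩

lemma exists_rthMax_witness (hr1 : 1 ≤ r) (hrp : r ≤ p) (w : Fin p → ℝ) :
    ∃ S : Finset (Fin p), S.card = r ∧ rthMax r w = sInf (w '' ↑S) ∧
      S.Nonempty ∧ ∀ j ∈ S, rthMax r w ≤ w j := by
  have hmem := (rthMax_set_nonempty hrp w).csSup_mem (rthMax_set_finite (r := r) w)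
  obtain ⟨S, hcard, heq⟩ := hmem
  have hne : S.Nonempty := Finset.card_pos.1 (by omega)
  refine ⟨S, hcard, heq, hne, fun j hj => ?_⟩
  rw [rthMax, heq]
  exact csInf_le (S.finite_toSet.image w).bddBelow (Set.mem_image_of_mem w (by exact_mod_cast hj))

lemma rthMax_le_add (hr1 : 1 ≤ r) (hrp : r ≤ p) {w v : Fin p → ℝ} {ε : ℝ}
    (h : ∀ j, w j ≤ v j + ε) : rthMax r w ≤ rthMax r v + ε := by
  apply csSup_le (rthMax_set_nonempty hrp w)
  rintro m ⟨S, hcard, rfl⟩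
  have hne : S.Nonempty := Finset.card_pos.1 (by omega)
  have hvne : (v '' ↑S).Nonempty := (hne.to_set).image v
  obtain ⟨j₀, hj₀, hj₀eq⟩ := hvne.csInf_mem (S.finite_toSet.image v)
  calc sInf (w '' ↑S) ≤ w j₀ :=
        csInf_le (S.finite_toSet.image w).bddBelow (Set.mem_image_of_mem w hj₀)
    _ ≤ v j₀ + ε := h j₀
    _ ≤ rthMax r v + ε := by
        have h1 : sInf (v '' ↑S) ≤ rthMax r v := le_rthMax v hcard
        rw [hj₀eq]; linarith

lemma continuousAt_rthMax_comp {X : Type*} [TopologicalSpace X]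
    (hr1 : 1 ≤ r) (hrp : r ≤ p) {g : X → Fin p → ℝ} {t : X}
    (hg : ∀ j, ContinuousAt (fun s => g s j) t) :
    ContinuousAt (fun s => rthMax r (g s)) t := by
  rw [ContinuousAt, Metric.tendsto_nhds]
  intro ε hε
  have hev : ∀ᶠ s in nhds t, ∀ j, |g s j - g t j| < ε / 2 := by
    rw [Filter.eventually_all]
    intro j
    have := (hg j).tendsto
    rw [Metric.tendsto_nhds] at this
    simpa [Real.dist_eq] using this (ε / 2) (by linarith)
  filter_upwards [hev] with s hs
  have h1 : rthMax r (g s) ≤ rthMax r (g t) + ε / 2 :=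
    rthMax_le_add hr1 hrp (fun j => by have := hs j; rw [abs_sub_lt_iff] at this; linarith)
  have h2 : rthMax r (g t) ≤ rthMax r (g s) + ε / 2 :=
    rthMax_le_add hr1 hrp (fun j => by have := hs j; rw [abs_sub_lt_iff] at this; linarith)
  rw [Real.dist_eq, abs_sub_lt_iff]
  constructor <;> linarith

end rth

section cross

open Set Filter Topology

/-- From `HasDerivAt f d t` with `b < d`, eventually to the right `f t' ≥ f t + b (t' - t)`. -/
lemma eventually_right_lower {f : ℝ → ℝ} {t d b : ℝ} (hf : HasDerivAt f d t) (hbd : b < d) :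
    ∀ᶠ t' in nhdsWithin t (Set.Ioi t), f t + b * (t' - t) ≤ f t' := by
  have hs := hasDerivAt_iff_tendsto_slope.1 hf
  have hs' : Tendsto (slope f t) (nhdsWithin t (Set.Ioi t)) (nhds d) :=
    hs.mono_left (nhdsWithin_mono t (fun y hy => ne_of_gt hy))
  filter_upwards [hs'.eventually (eventually_gt_nhds hbd), self_mem_nhdsWithin] with t' h1 h2
  have ht' : (0:ℝ) < t' - t := sub_pos.2 h2
  rw [slope_def_field] at h1
  have := (lt_div_iff₀ ht').1 h1
  linarith

/-- First zero of a continuous function that starts nonneg and ends nonpos. -/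
lemma exists_first_zero {f : ℝ → ℝ} {a b : ℝ} (hab : a ≤ b)
    (hc : ContinuousOn f (Set.Icc a b)) (ha : 0 ≤ f a) (hb : f b ≤ 0) :
    ∃ c ∈ Set.Icc a b, f c = 0 ∧ ∀ t ∈ Set.Icc a c, 0 ≤ f t := by
  set T := Set.Icc a b ∩ f ⁻¹' (Set.Iic 0) with hT
  have hTc : IsClosed T := hc.preimage_isClosed_of_isClosed isClosed_Icc isClosed_Iic
  have hTne : T.Nonempty := ⟨b, ⟨hab, le_refl b⟩, hb⟩
  have hTbd : BddBelow T := ⟨a, fun t ht => ht.1.1⟩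
  set c := sInf T with hc0
  have hcT : c ∈ T := hTc.csInf_mem hTne hTbd
  have hcab : c ∈ Set.Icc a b := hcT.1
  have hlt : ∀ t ∈ Set.Ico a c, 0 < f t := by
    intro t ht
    by_contra hle
    push_neg at hle
    exact absurd (csInf_le hTbd ⟨⟨ht.1, le_trans ht.2.le hcab.2⟩, hle⟩) (not_le.2 ht.2)
  have hge : 0 ≤ f c := by
    rcases eq_or_lt_of_le hcab.1 with heq | hlt'
    · rwa [← heq]
    · haveI : (nhdsWithin c (Set.Ico a c)).NeBot := by
        rw [← mem_closure_iff_nhdsWithin_neBot, closure_Ico (ne_of_lt hlt')]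
        exact ⟨hcab.1, le_refl c⟩
      have htend : Tendsto f (nhdsWithin c (Set.Ico a c)) (nhds (f c)) :=
        (hc.continuousWithinAt hcab).mono (fun t ht => ⟨ht.1, le_trans ht.2.le hcab.2⟩)
      exact ge_of_tendsto htend
        (eventually_nhdsWithin_of_forall (fun t ht => (hlt t ht).le))
  have hfc : f c = 0 := le_antisymm hcT.2 hge
  exact ⟨c, hcab, hfc, fun t ht => by
    rcases eq_or_lt_of_le ht.2 with heq | hlt'
    · rw [heq, hfc]
    · exact (hlt t ⟨ht.1, hlt'⟩).le⟩

/-- First strict crossing: gives in addition frequent negativity just to the right. -/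
lemma exists_first_cross {f : ℝ → ℝ} {a b : ℝ} (hab : a ≤ b)
    (hc : ContinuousOn f (Set.Icc a b)) (ha : 0 ≤ f a) (hb : f b < 0) :
    ∃ c ∈ Set.Ico a b, f c = 0 ∧ (∀ t ∈ Set.Icc a c, 0 ≤ f t) ∧
      ∃ᶠ t' in nhdsWithin c (Set.Ioi c), f t' < 0 := by
  set T := {t | t ∈ Set.Icc a b ∧ f t < 0} with hT
  have hTne : T.Nonempty := ⟨b, ⟨hab, le_refl b⟩, hb⟩
  have hTbd : BddBelow T := ⟨a, fun t ht => ht.1.1⟩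
  set c := sInf T with hc0
  have hca : a ≤ c := le_csInf hTne (fun t ht => ht.1.1)
  have hcb : c ≤ b := csInf_le hTbd ⟨⟨hab, le_refl b⟩, hb⟩
  have hcab : c ∈ Set.Icc a b := ⟨hca, hcb⟩
  have hnn : ∀ t ∈ Set.Ico a c, 0 ≤ f t := by
    intro t ht
    by_contra hle
    push_neg at hle
    exact absurd (csInf_le hTbd ⟨⟨ht.1, le_trans ht.2.le hcb⟩, hle⟩) (not_le.2 ht.2)
  haveI hclos : (nhdsWithin c T).NeBot :=
    mem_closure_iff_nhdsWithin_neBot.1 (csInf_mem_closure hTne hTbd)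
  have hle0 : f c ≤ 0 := by
    have htend : Tendsto f (nhdsWithin c T) (nhds (f c)) :=
      (hc.continuousWithinAt hcab).mono (fun t ht => ht.1)
    exact le_of_tendsto htend (eventually_nhdsWithin_of_forall (fun t ht => ht.2.le))
  have hge : 0 ≤ f c := by
    rcases eq_or_lt_of_le hca with heq | hlt'
    · rwa [← heq]
    · haveI : (nhdsWithin c (Set.Ico a c)).NeBot := by
        rw [← mem_closure_iff_nhdsWithin_neBot, closure_Ico (ne_of_lt hlt')]
        exact ⟨hca, le_refl c⟩
      have htend : Tendsto f (nhdsWithin c (Set.Ico a c)) (nhds (f c)) :=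
        (hc.continuousWithinAt hcab).mono (fun t ht => ⟨ht.1, le_trans ht.2.le hcb⟩)
      exact ge_of_tendsto htend (eventually_nhdsWithin_of_forall hnn)
  have hfc : f c = 0 := le_antisymm hle0 hge
  have hTIoi : T ⊆ Set.Ioi c := by
    intro t ht
    rcases eq_or_lt_of_le (csInf_le hTbd ht) with heq | hlt'
    · exact absurd (heq ▸ ht.2) (by rw [hfc]; exact lt_irrefl 0)
    · exact hlt'
  have hfreq : ∃ᶠ t' in nhdsWithin c (Set.Ioi c), f t' < 0 := by
    have h1 : ∃ᶠ t' in nhdsWithin c T, f t' < 0 :=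
      ((eventually_nhdsWithin_of_forall (fun t ht => ht.2)).frequently)
    exact h1.filter_mono (nhdsWithin_mono c hTIoi)
  have hcltb : c < b := by
    rcases eq_or_lt_of_le hcb with heq | h
    · rw [heq] at hfc; rw [hfc] at hb; exact absurd hb (lt_irrefl 0)
    · exact h
  exact ⟨c, ⟨hca, hcltb⟩, hfc, fun t ht => by
    rcases eq_or_lt_of_le ht.2 with heq | hlt'
    · rw [heq, hfc]
    · exact hnn t ⟨ht.1, hlt'⟩, hfreq⟩

/-- Dini-type nonnegativity lemma. -/
lemma nonneg_of_dini {f : ℝ → ℝ} {a b : ℝ} (hab : a ≤ b)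
    (hc : ContinuousOn f (Set.Icc a b)) (ha : 0 ≤ f a)
    (hd : ∀ t ∈ Set.Ico a b, f t ≤ 0 → ∀ ε : ℝ, 0 < ε →
      ∀ᶠ t' in nhdsWithin t (Set.Ioi t), f t - ε * (t' - t) ≤ f t') :
    ∀ t ∈ Set.Icc a b, 0 ≤ f t := by
  by_contra hbad
  push_neg at hbad
  obtain ⟨t₁, ht₁, hft₁⟩ := hbad
  have hat₁ : a < t₁ := by
    rcases eq_or_lt_of_le ht₁.1 with heq | h
    · rw [← heq] at hft₁; linarith
    · exact h
  set ε := (-f t₁) / (2 * (t₁ - a)) with hε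
  have hεpos : 0 < ε := div_pos (by linarith) (by linarith)
  set g := fun t => f t + ε * (t - a) with hg
  have hgc : ContinuousOn g (Set.Icc a t₁) :=
    (hc.mono (Set.Icc_subset_Icc (le_refl a) ht₁.2)).add
      ((continuous_const.mul (continuous_id.sub continuous_const)).continuousOn)
  have hga : 0 ≤ g a := by simp [hg, ha]
  have hgt₁ : g t₁ < 0 := by
    have hne : t₁ - a ≠ 0 := ne_of_gt (by linarith)
    have : ε * (t₁ - a) = -f t₁ / 2 := by
      rw [hε]
      field_simp
    simp only [hg]
    rw [this]
    linarith
  obtain ⟨c, hcmem, hgc0, hgnn, hgfreq⟩ := exists_first_cross hat₁.le hgc hga hgt₁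
  have hfc : f c = -(ε * (c - a)) := by
    have : f c + ε * (c - a) = 0 := hgc0
    linarith
  have hfcle : f c ≤ 0 := by
    rw [hfc]
    have : 0 ≤ ε * (c - a) := mul_nonneg hεpos.le (by linarith [hcmem.1])
    linarith
  have hcIco : c ∈ Set.Ico a b := ⟨hcmem.1, lt_of_lt_of_le hcmem.2 ht₁.2⟩
  have hev := hd c hcIco hfcle (ε / 2) (by linarith)
  have hcomb := hgfreq.and_eventually (hev.and self_mem_nhdsWithin)
  obtain ⟨t', hneg, hlow, htIoi⟩ := hcomb.exists
  have hΔ : 0 < t' - c := sub_pos.2 htIoi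
  -- hneg : g t' < 0, i.e. f t' < -ε (t' - a); hlow : f c - ε/2 (t' - c) ≤ f t'
  have h1 : f t' < -(ε * (t' - a)) := by
    have : f t' + ε * (t' - a) < 0 := hneg
    linarith
  have h2 : f c - ε / 2 * (t' - c) ≤ f t' := hlow
  rw [hfc] at h2
  have hca' : a ≤ c := hcmem.1
  nlinarith [hεpos, hΔ]

end cross


/-- Theorem 1 (combinatorial stabilization, closed-loop form): with `h_j = c_j - V_j`,
`R_j = {V_j ≤ c_j}`, `h̃ = max^{(r)} h_j` and `R̃ = {h̃ ≥ 0}`, the combined relaxed-CLF and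
combinatorial-CBF conditions render `R̃` forward invariant, `x*_{j†}` asymptotically
stable, and `R̃ ∩ R_{j†}` forward invariant and contained in the region of attraction. -/
theorem combinatorial_stabilization {n p : ℕ}
    (r : ℕ) (hr1 : 1 ≤ r) (hrp : r ≤ p) (jd : Fin p)
    (xstar : Fin p → EuclideanSpace ℝ (Fin n))
    (V : Fin p → EuclideanSpace ℝ (Fin n) → ℝ)
    (hV : ∀ j, ContDiff ℝ 1 (V j)) (hV0 : ∀ j, V j (xstar j) = 0)
    (c : Fin p → ℝ) (hc : ∀ j, 0 < c j)
    -- (a) the selected equilibrium is in the interior of R̃ ∩ R_{j†}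
    (hint : xstar jd ∈ interior
      ({y : EuclideanSpace ℝ (Fin n) | 0 ≤ rthMax r (fun j => c j - V j y)} ∩
       {y : EuclideanSpace ℝ (Fin n) | V jd y ≤ c jd}))
    -- (b) class-K sandwich bounds for V_{j†} near x*_{j†}
    (r₀ : ℝ) (hr₀ : 0 < r₀)
    (α₁ α₂ : ℝ → ℝ) (hα₁ : IsClassK α₁) (hα₂ : IsClassK α₂)
    (hRball : {y : EuclideanSpace ℝ (Fin n) | V jd y ≤ c jd} ⊆ Metric.ball (xstar jd) r₀)
    (hbound : ∀ y : EuclideanSpace ℝ (Fin n), ‖y - xstar jd‖ < r₀ →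
      α₁ ‖y - xstar jd‖ ≤ V jd y ∧ V jd y ≤ α₂ ‖y - xstar jd‖)
    -- (c) closed-loop vector field and certificate inequalities
    (F : EuclideanSpace ℝ (Fin n) → EuclideanSpace ℝ (Fin n))
    (hF : Continuous F) (hFeq : F (xstar jd) = 0)
    (θ : EuclideanSpace ℝ (Fin n) → ℝ) (hθ : Continuous θ) (hθ0 : ∀ y, 0 ≤ θ y)
    (αj : ℝ → ℝ) (hαj : IsClassK αj) (hαjlip : LocallyLipschitzOn (Set.Ici 0) αj)
    (αh : ℝ → ℝ) (hαh : IsClassKe αh) (hαhlip : LocallyLipschitz αh)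
    (ρ : ℝ → ℝ) (hρc : Continuous ρ) (hρ : IsPosDef ρ)
    (D : Set (EuclideanSpace ℝ (Fin n))) (hD : IsOpen D)
    (hRD : {y : EuclideanSpace ℝ (Fin n) | 0 ≤ rthMax r (fun j => c j - V j y)} ⊆ D)
    (hCLF : ∀ y ∈ D,
      ⟪gradient (V jd) y, F y⟫ ≤
        -αj (V jd y) + θ y * max 0 (-(c jd - V jd y)))
    (hCBF : ∀ j : Fin p, ∀ y ∈ D,
      ⟪gradient (fun z => c j - V j z) y, F y⟫ ≥
        -αh (c j - V j y) - θ y * ρ ((c j - V j y) - rthMax r (fun i => c i - V i y))) :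
    -- (i) forward invariance of R̃
    (∀ x : ℝ → EuclideanSpace ℝ (Fin n),
      (∀ t : ℝ, 0 ≤ t → HasDerivAt x (F (x t)) t) →
      0 ≤ rthMax r (fun j => c j - V j (x 0)) →
      ∀ t : ℝ, 0 ≤ t → 0 ≤ rthMax r (fun j => c j - V j (x t))) ∧
    -- (ii) asymptotic stability of x*_{j†}
    ((∀ ε : ℝ, 0 < ε → ∃ δ > (0:ℝ),
      ∀ x : ℝ → EuclideanSpace ℝ (Fin n),
        (∀ t : ℝ, 0 ≤ t → HasDerivAt x (F (x t)) t) →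
        ‖x 0 - xstar jd‖ < δ → ∀ t : ℝ, 0 ≤ t → ‖x t - xstar jd‖ < ε) ∧
     (∃ δ₀ > (0:ℝ),
      ∀ x : ℝ → EuclideanSpace ℝ (Fin n),
        (∀ t : ℝ, 0 ≤ t → HasDerivAt x (F (x t)) t) →
        ‖x 0 - xstar jd‖ < δ₀ → Filter.Tendsto x Filter.atTop (nhds (xstar jd)))) ∧
    -- (iii) R̃ ∩ R_{j†} is forward invariant and in the region of attraction
    (∀ x : ℝ → EuclideanSpace ℝ (Fin n),
      (∀ t : ℝ, 0 ≤ t → HasDerivAt x (F (x t)) t) →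
      0 ≤ rthMax r (fun j => c j - V j (x 0)) → V jd (x 0) ≤ c jd →
      (∀ t : ℝ, 0 ≤ t →
        0 ≤ rthMax r (fun j => c j - V j (x t)) ∧ V jd (x t) ≤ c jd) ∧
      Filter.Tendsto x Filter.atTop (nhds (xstar jd))) := by
  classical
  have hVdiff : ∀ (j : Fin p) (y : EuclideanSpace ℝ (Fin n)), DifferentiableAt ℝ (V j) y :=
    fun j y => ((hV j).differentiable one_ne_zero).differentiableAt
  have hgradsub : ∀ (j : Fin p) (y : EuclideanSpace ℝ (Fin n)),
      gradient (fun z => c j - V j z) y = - gradient (V j) y := by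
    intro j y
    have h1 := (hVdiff j y).hasGradientAt
    have h2 : HasFDerivAt (fun z => c j - V j z)
        (-(InnerProductSpace.toDual ℝ _ (gradient (V j) y))) y := by
      exact h1.hasFDerivAt.const_sub (c j)
    have h3 := hasFDerivAt_iff_hasGradientAt.1 h2
    rw [h3.gradient]
    rw [map_neg, LinearIsometryEquiv.symm_apply_apply]
  have hVder : ∀ (x : ℝ → EuclideanSpace ℝ (Fin n)) (t : ℝ), HasDerivAt x (F (x t)) t →
      HasDerivAt (fun s => V jd (x s)) ⟪gradient (V jd) (x t), F (x t)⟫ t := by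
    intro x t hxt
    have h1 := ((hVdiff jd (x t)).hasGradientAt).hasFDerivAt.comp_hasDerivAt t hxt
    simpa [InnerProductSpace.toDual_apply_apply, Function.comp_def] using h1
  have hHder : ∀ (j : Fin p) (x : ℝ → EuclideanSpace ℝ (Fin n)) (t : ℝ),
      HasDerivAt x (F (x t)) t →
      HasDerivAt (fun s => c j - V j (x s))
        ⟪gradient (fun z => c j - V j z) (x t), F (x t)⟫ t := by
    intro j x t hxt
    have h1 := ((hVdiff j (x t)).hasGradientAt).hasFDerivAt.comp_hasDerivAt t hxt
    have h2 := h1.const_sub (c j)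
    have h3 : ⟪gradient (fun z => c j - V j z) (x t), F (x t)⟫
        = -(⟪gradient (V j) (x t), F (x t)⟫) := by
      rw [hgradsub]; exact inner_neg_left _ _
    rw [h3]
    simpa [InnerProductSpace.toDual_apply_apply] using h2
  have hmContAt : ∀ (x : ℝ → EuclideanSpace ℝ (Fin n)),
      (∀ t : ℝ, 0 ≤ t → HasDerivAt x (F (x t)) t) → ∀ t : ℝ, 0 ≤ t →
      ContinuousAt (fun s => rthMax r (fun j => c j - V j (x s))) t := by
    intro x hx t ht
    refine continuousAt_rthMax_comp hr1 hrp (fun j => ?_)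
    exact continuousAt_const.sub ((hVdiff j (x t)).continuousAt.comp (hx t ht).continuousAt)
  -- (i) forward invariance of R̃
  have hinv : ∀ x : ℝ → EuclideanSpace ℝ (Fin n),
      (∀ t : ℝ, 0 ≤ t → HasDerivAt x (F (x t)) t) →
      0 ≤ rthMax r (fun j => c j - V j (x 0)) →
      ∀ t : ℝ, 0 ≤ t → 0 ≤ rthMax r (fun j => c j - V j (x t)) := by
    intro x hx h0
    by_contra hbad
    push_neg at hbad
    obtain ⟨t₁, ht₁0, hmt₁⟩ := hbad
    have hmcont : ContinuousOn (fun s => rthMax r (fun j => c j - V j (x s))) (Set.Icc 0 t₁) :=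
      fun s hs => (hmContAt x hx s hs.1).continuousWithinAt
    obtain ⟨c₀, hc₀mem, hc₀0, hge0, hfreq⟩ := exists_first_cross ht₁0 hmcont h0 hmt₁
    have hc₀nn : (0:ℝ) ≤ c₀ := hc₀mem.1
    have hmc₀ : rthMax r (fun j => c j - V j (x c₀)) = 0 := hc₀0
    have hxc₀D : x c₀ ∈ D := hRD (show 0 ≤ rthMax r (fun j => c j - V j (x c₀)) from hmc₀.ge)
    obtain ⟨η, hηpos, hη⟩ := Metric.eventually_nhds_iff.1
      ((hx c₀ hc₀nn).continuousAt.eventually_mem (hD.mem_nhds hxc₀D))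
    have hc₀b : c₀ < c₀ + η/2 := by linarith
    have hDmem : ∀ t ∈ Set.Icc c₀ (c₀ + η/2), x t ∈ D := by
      intro t ht
      apply hη
      rw [Real.dist_eq, abs_of_nonneg (by linarith [ht.1])]
      linarith [ht.2]
    have hnn : ∀ t ∈ Set.Icc c₀ (c₀ + η/2),
        0 ≤ rthMax r (fun j => c j - V j (x t)) := by
      apply nonneg_of_dini hc₀b.le
        (fun s hs => (hmContAt x hx s (le_trans hc₀nn hs.1)).continuousWithinAt)
        hmc₀.ge
      intro t ht hmt ε hε
      have hmt' : rthMax r (fun j => c j - V j (x t)) ≤ 0 := hmt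
      obtain ⟨S, hScard, hSeq, hSne, hSge⟩ :=
        exists_rthMax_witness hr1 hrp (fun j => c j - V j (x t))
      have ht0 : 0 ≤ t := le_trans hc₀nn ht.1
      have hxtD : x t ∈ D := hDmem t ⟨ht.1, ht.2.le⟩
      have hjev : ∀ j ∈ S, ∀ᶠ t' in nhdsWithin t (Set.Ioi t),
          rthMax r (fun i => c i - V i (x t)) - ε * (t' - t) ≤ c j - V j (x t') := by
        intro j hj
        rcases eq_or_lt_of_le (hSge j hj) with heq | hlt
        · -- active index
          have hder := hHder j x t (hx t ht0)
          have hbnd := hCBF j (x t) hxtD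
          have hzero : (c j - V j (x t)) - rthMax r (fun i => c i - V i (x t)) = 0 := by
            rw [← heq]; ring
          rw [hzero, hρ.2.1, mul_zero] at hbnd
          have hαhle : αh (c j - V j (x t)) ≤ 0 := by
            rw [← heq]
            calc αh (rthMax r (fun i => c i - V i (x t))) ≤ αh 0 := hαh.2.1.monotone hmt'
              _ = 0 := hαh.2.2
          have hdpos : (-ε : ℝ) < ⟪gradient (fun z => c j - V j z) (x t), F (x t)⟫ := by
            have h0' : (0:ℝ) ≤ ⟪gradient (fun z => c j - V j z) (x t), F (x t)⟫ := by
              have := hbnd; linarith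
            linarith
          filter_upwards [eventually_right_lower hder hdpos] with t' h'
          rw [heq]
          linarith [h']
        · -- inactive index
          have hcont : ContinuousAt (fun s => c j - V j (x s)) t :=
            continuousAt_const.sub ((hVdiff j (x t)).continuousAt.comp (hx t ht0).continuousAt)
          have hev1 : ∀ᶠ t' in nhdsWithin t (Set.Ioi t),
              rthMax r (fun i => c i - V i (x t)) < c j - V j (x t') :=
            (hcont.eventually (eventually_gt_nhds hlt)).filter_mono nhdsWithin_le_nhds
          filter_upwards [hev1, self_mem_nhdsWithin] with t' h' hioi
          have : (0:ℝ) ≤ ε * (t' - t) :=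
            mul_nonneg hε.le (by have : t < t' := hioi; linarith)
          linarith
      have hall := (Filter.eventually_all_finset S).2 hjev
      filter_upwards [hall] with t' h'
      show rthMax r (fun j => c j - V j (x t)) - ε * (t' - t)
          ≤ rthMax r (fun j => c j - V j (x t'))
      calc rthMax r (fun j => c j - V j (x t)) - ε * (t' - t)
          ≤ sInf ((fun j => c j - V j (x t')) '' ↑S) := by
            refine le_csInf ((Finset.coe_nonempty.2 hSne).image _) ?_
            rintro m ⟨j, hj, rfl⟩
            exact h' j hj
        _ ≤ rthMax r (fun j => c j - V j (x t')) := le_rthMax _ hScard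
    have hIoo := Ioo_mem_nhdsGT_of_mem (Set.mem_Ico.2 ⟨le_refl c₀, hc₀b⟩)
    obtain ⟨t', hneg, ht'Ioo⟩ :=
      (hfreq.and_eventually (Filter.eventually_of_mem hIoo (fun y hy => hy))).exists
    exact absurd (hnn t' ⟨ht'Ioo.1.le, ht'Ioo.2.le⟩) (not_le.2 hneg)
  -- generic antitone lemma for V_{j†} + k t along trajectories in the good region
  have hanti_gen : ∀ (x : ℝ → EuclideanSpace ℝ (Fin n)),
      (∀ t : ℝ, 0 ≤ t → HasDerivAt x (F (x t)) t) → ∀ (k a b2 : ℝ), 0 ≤ a →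
      (∀ t ∈ Set.Icc a b2, x t ∈ D ∧ V jd (x t) ≤ c jd ∧ k ≤ αj (V jd (x t))) →
      ∀ t ∈ Set.Icc a b2, V jd (x t) + k * t ≤ V jd (x a) + k * a := by
    intro x hx k a b2 ha0 hgood t ht
    have hab2 : a ≤ b2 := le_trans ht.1 ht.2
    have hkt : ∀ s : ℝ, HasDerivAt (fun y : ℝ => k * y) k s := by
      intro s
      simpa using (hasDerivAt_id s).const_mul k
    have key : AntitoneOn (fun s => V jd (x s) + k * s) (Set.Icc a b2) := by
      apply antitoneOn_of_deriv_nonpos (convex_Icc a b2)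
      · intro s hs
        have hs0 : 0 ≤ s := le_trans ha0 hs.1
        exact (((hVder x s (hx s hs0)).add (hkt s)).continuousAt).continuousWithinAt
      · intro s hs
        rw [interior_Icc] at hs
        have hs0 : 0 ≤ s := le_trans ha0 hs.1.le
        exact (((hVder x s (hx s hs0)).add (hkt s)).differentiableAt).differentiableWithinAt
      · intro s hs
        rw [interior_Icc] at hs
        have hs0 : 0 ≤ s := le_trans ha0 hs.1.le
        obtain ⟨hD', hVc', hk'⟩ := hgood s ⟨hs.1.le, hs.2.le⟩
        have hder : HasDerivAt (fun s => V jd (x s) + k * s) (⟪gradient (V jd) (x s), F (x s)⟫ + k) s :=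
          (hVder x s (hx s hs0)).add (hkt s)
        rw [hder.deriv]
        have hbnd := hCLF (x s) hD'
        have hmax : max 0 (-(c jd - V jd (x s))) = 0 := max_eq_left (by linarith)
        rw [hmax, mul_zero, add_zero] at hbnd
        linarith
    have := key (Set.mem_Icc.2 ⟨le_refl a, hab2⟩) ht ht.1
    simpa using this
  -- (iii) core
  have hiii : ∀ x : ℝ → EuclideanSpace ℝ (Fin n),
      (∀ t : ℝ, 0 ≤ t → HasDerivAt x (F (x t)) t) →
      0 ≤ rthMax r (fun j => c j - V j (x 0)) → V jd (x 0) ≤ c jd →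
      (∀ t : ℝ, 0 ≤ t →
        0 ≤ rthMax r (fun j => c j - V j (x t)) ∧ V jd (x t) ≤ c jd) ∧
      Filter.Tendsto x Filter.atTop (nhds (xstar jd)) := by
    intro x hx h0 hV0'
    have hR : ∀ t : ℝ, 0 ≤ t → 0 ≤ rthMax r (fun j => c j - V j (x t)) := hinv x hx h0
    have hxD : ∀ t : ℝ, 0 ≤ t → x t ∈ D := fun t ht => hRD (hR t ht)
    have hB : ∀ t : ℝ, 0 ≤ t → V jd (x t) ≤ c jd := by
      by_contra hbad
      push_neg at hbad
      obtain ⟨t₁, ht₁0, ht₁⟩ := hbad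
      have hfc : ContinuousOn (fun s => c jd - V jd (x s)) (Set.Icc 0 t₁) := by
        intro s hs
        exact (continuousAt_const.sub
          ((hVdiff jd (x s)).continuousAt.comp (hx s hs.1).continuousAt)).continuousWithinAt
      obtain ⟨c₀, hc₀mem, hc₀0, hge0, hfreq⟩ := exists_first_cross ht₁0 hfc
        (show (0:ℝ) ≤ c jd - V jd (x 0) by linarith)
        (show c jd - V jd (x t₁) < 0 by linarith)
      have hc00 : (0:ℝ) ≤ c₀ := hc₀mem.1
      have hc₀0' : c jd - V jd (x c₀) = 0 := hc₀0
      have hVeq : V jd (x c₀) = c jd := by linarith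
      have hder := hHder jd x c₀ (hx c₀ hc00)
      have hbnd := hCLF (x c₀) (hxD c₀ hc00)
      have hmax : max 0 (-(c jd - V jd (x c₀))) = 0 := by rw [hc₀0']; simp
      rw [hmax, mul_zero, add_zero] at hbnd
      have hαjpos : 0 < αj (c jd) := by
        have := hαj.2.1 Set.self_mem_Ici (Set.mem_Ici.2 (hc jd).le) (hc jd)
        rwa [hαj.2.2.1] at this
      have hdval : (0:ℝ) < ⟪gradient (fun z => c jd - V jd z) (x c₀), F (x c₀)⟫ := by
        have h3 : ⟪gradient (fun z => c jd - V jd z) (x c₀), F (x c₀)⟫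
            = -(⟪gradient (V jd) (x c₀), F (x c₀)⟫) := by
          rw [hgradsub]; exact inner_neg_left _ _
        rw [hVeq] at hbnd
        rw [h3]
        linarith
      obtain ⟨t', hneg, hlow, hIoi⟩ :=
        (hfreq.and_eventually ((eventually_right_lower hder hdval).and
          self_mem_nhdsWithin)).exists
      have : (0:ℝ) ≤ c jd - V jd (x t') := by
        have h1 := hlow
        rw [hc₀0'] at h1
        linarith
      exact absurd this (not_le.2 hneg)
    have hball : ∀ t : ℝ, 0 ≤ t → ‖x t - xstar jd‖ < r₀ :=
      fun t ht => mem_ball_iff_norm.1 (hRball (hB t ht))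
    have hVnn : ∀ t : ℝ, 0 ≤ t → 0 ≤ V jd (x t) := fun t ht =>
      le_trans (hα₁.2.2.2 _ (norm_nonneg _)) ((hbound _ (hball t ht)).1)
    have hanti : ∀ s t : ℝ, 0 ≤ s → s ≤ t → V jd (x t) ≤ V jd (x s) := by
      intro s t hs hst
      have := hanti_gen x hx 0 s t hs (fun u hu =>
        ⟨hxD u (le_trans hs hu.1), hB u (le_trans hs hu.1),
          hαj.2.2.2 _ (hVnn u (le_trans hs hu.1))⟩) t ⟨hst, le_refl t⟩
      simpa using this
    have hVto : Filter.Tendsto (fun t => V jd (x t)) Filter.atTop (nhds 0) := by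
      rw [Metric.tendsto_atTop]
      intro ε hε
      have hex : ∃ T : ℝ, 0 ≤ T ∧ V jd (x T) < ε := by
        by_contra hno
        push_neg at hno
        have hk : 0 < αj ε := by
          have := hαj.2.1 Set.self_mem_Ici (Set.mem_Ici.2 hε.le) hε
          rwa [hαj.2.2.1] at this
        have hT₀0 : 0 ≤ (V jd (x 0) + 1) / αj ε :=
          div_nonneg (by linarith [hVnn 0 le_rfl]) hk.le
        have hdec := hanti_gen x hx (αj ε) 0 ((V jd (x 0) + 1) / αj ε) le_rfl
          (fun u hu => ⟨hxD u hu.1, hB u hu.1,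
            hαj.2.1.monotoneOn (Set.mem_Ici.2 hε.le) (Set.mem_Ici.2 (hVnn u hu.1))
              (hno u hu.1)⟩)
          ((V jd (x 0) + 1) / αj ε) ⟨hT₀0, le_refl _⟩
        have hload : αj ε * ((V jd (x 0) + 1) / αj ε) = V jd (x 0) + 1 := by
          field_simp
        have hV0nn := hno _ hT₀0
        simp only [mul_zero, add_zero] at hdec
        linarith
      obtain ⟨T, hT0, hTε⟩ := hex
      refine ⟨T, fun t ht => ?_⟩
      have h1 : V jd (x t) ≤ V jd (x T) := hanti T t hT0 ht
      have h2 : 0 ≤ V jd (x t) := hVnn t (le_trans hT0 ht)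
      rw [Real.dist_eq, sub_zero, abs_of_nonneg h2]
      linarith
    refine ⟨fun t ht => ⟨hR t ht, hB t ht⟩, ?_⟩
    rw [Metric.tendsto_atTop]
    intro ε hε
    have hε'pos : 0 < min ε r₀ / 2 := by
      have := lt_min hε hr₀; linarith
    have hε'r₀ : min ε r₀ / 2 < r₀ := by
      have := min_le_right ε r₀; linarith
    have hε'ε : min ε r₀ / 2 < ε := by
      have := min_le_left ε r₀; linarith
    have hα₁pos : 0 < α₁ (min ε r₀ / 2) := by
      have := hα₁.2.1 Set.self_mem_Ici (Set.mem_Ici.2 hε'pos.le) hε'pos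
      rwa [hα₁.2.2.1] at this
    obtain ⟨N, hN⟩ := Metric.tendsto_atTop.1 hVto (α₁ (min ε r₀ / 2)) hα₁pos
    refine ⟨max N 0, fun t ht => ?_⟩
    have ht0 : (0:ℝ) ≤ t := le_trans (le_max_right N 0) ht
    have hVt : V jd (x t) < α₁ (min ε r₀ / 2) := by
      have := hN t (le_trans (le_max_left N 0) ht)
      rwa [Real.dist_eq, sub_zero, abs_of_nonneg (hVnn t ht0)] at this
    have hlt : ‖x t - xstar jd‖ < min ε r₀ / 2 := by
      by_contra hge'
      push_neg at hge'
      have hmono := hα₁.2.1.monotoneOn (Set.mem_Ici.2 hε'pos.le)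
        (Set.mem_Ici.2 (norm_nonneg (x t - xstar jd))) hge'
      have hlow := (hbound _ (hball t ht0)).1
      linarith
    rw [dist_eq_norm]
    linarith
  -- interior ball around the equilibrium
  obtain ⟨ε₀, hε₀pos, hball₀⟩ := Metric.isOpen_iff.1 isOpen_interior _ hint
  have hball₀' : Metric.ball (xstar jd) ε₀ ⊆
      ({y : EuclideanSpace ℝ (Fin n) | 0 ≤ rthMax r (fun j => c j - V j y)} ∩
       {y : EuclideanSpace ℝ (Fin n) | V jd y ≤ c jd}) :=
    hball₀.trans interior_subset
  refine ⟨hinv, ⟨?_, ⟨ε₀, hε₀pos, fun x hx hx0 => ?_⟩⟩, hiii⟩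
  · -- stability
    intro ε hε
    set ε' := min (min ε ε₀) r₀ / 2 with hε'def
    have hε'pos : 0 < ε' := by
      have := lt_min (lt_min hε hε₀pos) hr₀; rw [hε'def]; linarith
    have hε'r₀ : ε' < r₀ := by
      have := min_le_right (min ε ε₀) r₀; rw [hε'def]; linarith
    have hε'ε : ε' < ε := by
      have h1 := min_le_left (min ε ε₀) r₀
      have h2 := min_le_left ε ε₀
      rw [hε'def]; linarith
    have hε'ε₀ : ε' < ε₀ := by
      have h1 := min_le_left (min ε ε₀) r₀
      have h2 := min_le_right ε ε₀
      rw [hε'def]; linarith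
    have hα₁pos : 0 < α₁ ε' := by
      have := hα₁.2.1 Set.self_mem_Ici (Set.mem_Ici.2 hε'pos.le) hε'pos
      rwa [hα₁.2.2.1] at this
    have hcont0 : ∀ᶠ s in nhdsWithin 0 (Set.Ici 0), α₂ s < α₁ ε' := by
      have h1 := (hα₂.1 0 Set.self_mem_Ici).tendsto
      rw [hα₂.2.2.1] at h1
      exact h1.eventually (eventually_lt_nhds hα₁pos)
    obtain ⟨δ₂, hδ₂pos, hδ₂⟩ := Metric.mem_nhdsWithin_iff.1 hcont0
    refine ⟨min δ₂ ε' / 2, by have := lt_min hδ₂pos hε'pos; linarith, ?_⟩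
    intro x hx hx0 t ht
    have hδε' : min δ₂ ε' / 2 ≤ ε' / 2 := by
      have := min_le_right δ₂ ε'; linarith
    have hδδ₂ : min δ₂ ε' / 2 < δ₂ := by
      have := min_le_left δ₂ ε'; linarith
    suffices h : ‖x t - xstar jd‖ < ε' by linarith
    by_contra hout
    push_neg at hout
    have hfc : ContinuousOn (fun s => ε' - ‖x s - xstar jd‖) (Set.Icc 0 t) := by
      intro s hs
      exact (continuousAt_const.sub
        (((hx s hs.1).continuousAt.sub continuousAt_const).norm)).continuousWithinAt
    obtain ⟨c₀, hc₀mem, hc₀0, hge0⟩ := exists_first_zero ht hfc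
      (show (0:ℝ) ≤ ε' - ‖x 0 - xstar jd‖ by linarith)
      (show ε' - ‖x t - xstar jd‖ ≤ 0 by linarith)
    have hc₀eq : ‖x c₀ - xstar jd‖ = ε' := by
      have : ε' - ‖x c₀ - xstar jd‖ = 0 := hc₀0
      linarith
    have hgood : ∀ s ∈ Set.Icc 0 c₀,
        x s ∈ D ∧ V jd (x s) ≤ c jd ∧ (0:ℝ) ≤ αj (V jd (x s)) := by
      intro s hs
      have h1 : ‖x s - xstar jd‖ ≤ ε' := by
        have := hge0 s hs; linarith
      have h2 : x s ∈ Metric.ball (xstar jd) ε₀ :=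
        mem_ball_iff_norm.2 (lt_of_le_of_lt h1 hε'ε₀)
      have h3 := hball₀' h2
      have h5 : 0 ≤ V jd (x s) :=
        le_trans (hα₁.2.2.2 _ (norm_nonneg _))
          ((hbound _ (lt_of_le_of_lt h1 hε'r₀)).1)
      exact ⟨hRD h3.1, h3.2, hαj.2.2.2 _ h5⟩
    have hanti' := hanti_gen x hx 0 0 c₀ le_rfl
      (fun u hu => by
        obtain ⟨ha, hb', hc'⟩ := hgood u hu
        exact ⟨ha, hb', by simpa using hc'⟩)
      c₀ ⟨hc₀mem.1, le_refl c₀⟩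
    simp only [mul_zero, add_zero] at hanti'
    have hx0r₀ : ‖x 0 - xstar jd‖ < r₀ := by linarith
    have hup := (hbound _ hx0r₀).2
    have hα₂lt : α₂ ‖x 0 - xstar jd‖ < α₁ ε' := by
      apply hδ₂
      constructor
      · rw [Metric.mem_ball, Real.dist_eq, sub_zero, abs_of_nonneg (norm_nonneg _)]
        linarith
      · exact norm_nonneg _
    have hlowc₀ : α₁ ε' ≤ V jd (x c₀) := by
      have := (hbound _ (by rw [hc₀eq]; exact hε'r₀)).1
      rwa [hc₀eq] at this
    linarith
  · -- attraction from within the interior ball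
    have hmem := hball₀' (mem_ball_iff_norm.2 hx0)
    exact (hiii x hx hmem.1 hmem.2).2
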